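/- For the Werner-state box P = p·[(1/√2)P_PR^{000} + (1−1/√2)P_N] + (1−p)·P_N and for the Werner Mermin box P' = p·(1/2)(P_PR^{000}+P_PR^{111}) + (1−p)·P_N (0 ≤ p ≤ 1), one has T(P) = G(P) = 2√2 p with Q(P) = 0, and T(P') = Q(P') = 2p with G(P') = 0; in both cases T = G + Q, i.e., the classical-correlation term C = G + Q − T vanishes. -/

import Mathlib

set_option maxHeartbeats 1000000


open scoped Matrix Kronecker

noncomputable section

/-- A bipartite box: `P i j m n` is the probability of outputs `m,n` given inputs `i,j`. -/
abbrev Box := Fin 2 → Fin 2 → Fin 2 → Fin 2 → ℝ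

/-- A box has nonnegative entries, normalized for every input pair. -/
def IsBox (P : Box) : Prop :=
  (∀ i j m n, 0 ≤ P i j m n) ∧ ∀ i j, (∑ m, ∑ n, P i j m n) = 1

/-- Nonsignaling conditions. -/
def NonSignaling (P : Box) : Prop :=
  (∀ i j j' m, (∑ n, P i j m n) = ∑ n, P i j' m n) ∧
  (∀ i i' j n, (∑ m, P i j m n) = ∑ m, P i' j m n)

/-- `(-1)^k` for a bit `k`. -/
def sgn (k : Fin 2) : ℝ := (-1 : ℝ) ^ (k : ℕ)

/-- Correlator `⟨A_i B_j⟩`. -/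
def corr (P : Box) (i j : Fin 2) : ℝ := ∑ m, ∑ n, sgn (m + n) * P i j m n

/-- Marginal expectation `⟨A_i⟩` of Alice. -/
def margA (P : Box) (i : Fin 2) : ℝ := ∑ m, ∑ n, sgn m * P i 0 m n

/-- Marginal expectation `⟨B_j⟩` of Bob. -/
def margB (P : Box) (j : Fin 2) : ℝ := ∑ m, ∑ n, sgn n * P 0 j m n

/-- The PR boxes `P_PR^{αβγ}`. -/
def PRbox (a b g : Fin 2) : Box :=
  fun i j m n => if m + n = i * j + a * i + b * j + g then 1/2 else 0

/-- The local deterministic boxes `P_D^{αβγε}`. -/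
def Dbox (a b g e : Fin 2) : Box :=
  fun i j m n => if m = a * i + b ∧ n = g * j + e then 1 else 0

/-- The white-noise box `P_N`. -/
def whiteNoise : Box := fun _ _ _ _ => 1/4

/-- The signed Bell-CHSH functions `B_{αβγ}`. -/
def BellF (P : Box) (a b g : Fin 2) : ℝ :=
  sgn g * corr P 0 0 + sgn (b + g) * corr P 0 1 + sgn (a + g) * corr P 1 0 +
    sgn (a + b + g + 1) * corr P 1 1

/-- The Bell distances `B_{αβ} = max_γ |B_{αβγ}|`. -/
def BellD (P : Box) (a b : Fin 2) : ℝ := max |BellF P a b 0| |BellF P a b 1|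

/-- Bell discord `G`. -/
def BellDiscord (P : Box) : ℝ :=
  min (min (|(|BellD P 0 0 - BellD P 0 1| - |BellD P 1 0 - BellD P 1 1|)|)
           (|(|BellD P 0 0 - BellD P 1 0| - |BellD P 0 1 - BellD P 1 1|)|))
      (|(|BellD P 0 0 - BellD P 1 1| - |BellD P 0 1 - BellD P 1 0|)|)

/-- The signed Mermin functions `M_{αβγ}`. -/
def MerminF (P : Box) (a b g : Fin 2) : ℝ :=
  if a = 0 ∧ b = 0 then sgn g * (corr P 0 1 + corr P 1 0)
  else if a = 0 ∧ b = 1 then sgn g * (corr P 0 0 + corr P 1 1)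
  else if a = 1 ∧ b = 0 then sgn g * (corr P 0 1 - corr P 1 0)
  else sgn g * (corr P 0 0 - corr P 1 1)

/-- The Mermin distances `M_{αβ} = max_γ |M_{αβγ}|`. -/
def MerminD (P : Box) (a b : Fin 2) : ℝ := max |MerminF P a b 0| |MerminF P a b 1|

/-- Mermin discord `Q`. -/
def MerminDiscord (P : Box) : ℝ :=
  min (min (|(|MerminD P 0 0 - MerminD P 0 1| - |MerminD P 1 0 - MerminD P 1 1|)|)
           (|(|MerminD P 0 0 - MerminD P 1 0| - |MerminD P 0 1 - MerminD P 1 1|)|))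
      (|(|MerminD P 0 0 - MerminD P 1 1| - |MerminD P 0 1 - MerminD P 1 0|)|)

/-- The signed product Bell expressions, built from products of marginal expectations. -/
def BellProdF (P : Box) (a b : Fin 2) : ℝ :=
  margA P 0 * margB P 0 + sgn b * (margA P 0 * margB P 1) + sgn a * (margA P 1 * margB P 0) +
    sgn (a + b + 1) * (margA P 1 * margB P 1)

/-- `B^{prod}_{αβ}`. -/
def BellProdD (P : Box) (a b : Fin 2) : ℝ := |BellProdF P a b|

/-- The total-correlation measure `T = max_{αβ} |B_{αβ} - B^{prod}_{αβ}|`. -/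
def Tmeasure (P : Box) : ℝ :=
  max (max (|BellD P 0 0 - BellProdD P 0 0|) (|BellD P 0 1 - BellProdD P 0 1|))
      (max (|BellD P 1 0 - BellProdD P 1 0|) (|BellD P 1 1 - BellProdD P 1 1|))

/-- A product box: the joint distribution factorizes into marginal distributions. -/
def IsProduct (P : Box) : Prop :=
  ∃ PA PB : Fin 2 → Fin 2 → ℝ,
    (∀ i m, 0 ≤ PA i m) ∧ (∀ i, ∑ m, PA i m = 1) ∧
    (∀ j n, 0 ≤ PB j n) ∧ (∀ j, ∑ n, PB j n = 1) ∧
    ∀ i j m n, P i j m n = PA i m * PB j n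

/-- A local box: a convex combination of local deterministic boxes. -/
def IsLocal (P : Box) : Prop :=
  ∃ q : Fin 2 → Fin 2 → Fin 2 → Fin 2 → ℝ,
    (∀ a b g e, 0 ≤ q a b g e) ∧ (∑ a, ∑ b, ∑ g, ∑ e, q a b g e) = 1 ∧
    ∀ i j m n, P i j m n = ∑ a, ∑ b, ∑ g, ∑ e, q a b g e * Dbox a b g e i j m n

/-- Local reversible operation (relabeling of inputs and, conditionally, outputs). -/
def relabel (sA a b sB c d : Fin 2) (P : Box) : Box :=
  fun i j m n => P (i + sA) (j + sB) (m + a * i + b) (n + c * j + d)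

/-- Pauli matrices. -/
def σx : Matrix (Fin 2) (Fin 2) ℂ := !![0, 1; 1, 0]
def σy : Matrix (Fin 2) (Fin 2) ℂ := !![0, -Complex.I; Complex.I, 0]
def σz : Matrix (Fin 2) (Fin 2) ℂ := !![1, 0; 0, -1]

/-- The observable `â · σ⃗` for a direction `â = (a_x, a_y, a_z)`. -/
def obs (v : ℝ × ℝ × ℝ) : Matrix (Fin 2) (Fin 2) ℂ :=
  (v.1 : ℂ) • σx + (v.2.1 : ℂ) • σy + (v.2.2 : ℂ) • σz

/-- Quantum correlator `⟨A ⊗ B⟩_ρ = Tr(ρ (A ⊗ B))`. -/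
def qCorr (ρ : Matrix (Fin 2 × Fin 2) (Fin 2 × Fin 2) ℂ)
    (A B : Matrix (Fin 2) (Fin 2) ℂ) : ℝ := (Matrix.trace (ρ * (A ⊗ₖ B))).re

/-- Projector onto the `(-1)^m` eigenspace of a ±1-valued observable `A`. -/
def projOut (A : Matrix (Fin 2) (Fin 2) ℂ) (m : Fin 2) : Matrix (Fin 2) (Fin 2) ℂ :=
  (2⁻¹ : ℂ) • ((1 : Matrix (Fin 2) (Fin 2) ℂ) + ((-1 : ℂ) ^ (m : ℕ)) • A)

/-- The quantum box determined by a two-qubit state and local observables. -/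
def qBox (ρ : Matrix (Fin 2 × Fin 2) (Fin 2 × Fin 2) ℂ)
    (A0 A1 B0 B1 : Matrix (Fin 2) (Fin 2) ℂ) : Box :=
  fun i j m n =>
    (Matrix.trace (ρ * ((projOut (if i = 0 then A0 else A1) m) ⊗ₖ
      (projOut (if j = 0 then B0 else B1) n)))).re

/-- The Bell state `|ψ⁺⟩ = (|00⟩ + |11⟩)/√2` as a density matrix. -/
def ρBell : Matrix (Fin 2 × Fin 2) (Fin 2 × Fin 2) ℂ :=
  Matrix.of fun x y =>
    (if x.1 = x.2 then ((Real.sqrt 2)⁻¹ : ℂ) else 0) *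
      (if y.1 = y.2 then ((Real.sqrt 2)⁻¹ : ℂ) else 0)

/-- The Schmidt state `ρ_S` with parameters `c = cos 2θ`, `s = sin 2θ`. -/
def ρSchmidt (c s : ℝ) : Matrix (Fin 2 × Fin 2) (Fin 2 × Fin 2) ℂ :=
  (4⁻¹ : ℂ) • ((1 : Matrix (Fin 2 × Fin 2) (Fin 2 × Fin 2) ℂ)
    + (c : ℂ) • (σz ⊗ₖ (1 : Matrix (Fin 2) (Fin 2) ℂ) + (1 : Matrix (Fin 2) (Fin 2) ℂ) ⊗ₖ σz)
    + (s : ℂ) • (σx ⊗ₖ σx - σy ⊗ₖ σy) + σz ⊗ₖ σz)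


/-- for the Werner Bell box `P = p[(1/√2)PR^{000}+(1−1/√2)P_N]+(1−p)P_N`
and the Werner Mermin box `P' = p(1/2)(PR^{000}+PR^{111})+(1−p)P_N`:
`T(P) = G(P) = 2√2 p`, `Q(P) = 0`, `T(P') = Q(P') = 2p`, `G(P') = 0`;
in both cases `T = G + Q`, i.e. the classical-correlation term vanishes. -/
theorem stmt19 (p : ℝ) (h0 : 0 ≤ p) (h1 : p ≤ 1) :
    let P : Box := p • ((Real.sqrt 2)⁻¹ • PRbox 0 0 0 +
      (1 - (Real.sqrt 2)⁻¹) • whiteNoise) + (1 - p) • whiteNoise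
    let P' : Box :=
      p • ((1/2 : ℝ) • PRbox 0 0 0 + (1/2 : ℝ) • PRbox 1 1 1) + (1 - p) • whiteNoise
    Tmeasure P = 2 * Real.sqrt 2 * p ∧ BellDiscord P = 2 * Real.sqrt 2 * p ∧
      MerminDiscord P = 0 ∧
      Tmeasure P' = 2 * p ∧ MerminDiscord P' = 2 * p ∧ BellDiscord P' = 0 ∧
      Tmeasure P = BellDiscord P + MerminDiscord P ∧
      Tmeasure P' = BellDiscord P' + MerminDiscord P' := by
  intro P P'
  have hsi : (0:ℝ) ≤ (Real.sqrt 2)⁻¹ := by positivity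
  have c00 : corr P 0 0 = p * (Real.sqrt 2)⁻¹ := by
    simp [P, corr, PRbox, whiteNoise, sgn, Fin.sum_univ_two]; ring
  have c01 : corr P 0 1 = p * (Real.sqrt 2)⁻¹ := by
    simp [P, corr, PRbox, whiteNoise, sgn, Fin.sum_univ_two]; ring
  have c10 : corr P 1 0 = p * (Real.sqrt 2)⁻¹ := by
    simp [P, corr, PRbox, whiteNoise, sgn, Fin.sum_univ_two]; ring
  have c11 : corr P 1 1 = -(p * (Real.sqrt 2)⁻¹) := by
    simp [P, corr, PRbox, whiteNoise, sgn, Fin.sum_univ_two]; ring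
  have d00 : corr P' 0 0 = 0 := by
    simp [P', corr, PRbox, whiteNoise, sgn, Fin.sum_univ_two]
  have d01 : corr P' 0 1 = p := by
    simp [P', corr, PRbox, whiteNoise, sgn, Fin.sum_univ_two]; ring
  have d10 : corr P' 1 0 = p := by
    simp [P', corr, PRbox, whiteNoise, sgn, Fin.sum_univ_two]; ring
  have d11 : corr P' 1 1 = 0 := by
    simp [P', corr, PRbox, whiteNoise, sgn, Fin.sum_univ_two]
  have mA0 : margA P 0 = 0 := by
    simp [P, margA, PRbox, whiteNoise, sgn, Fin.sum_univ_two]; ring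
  have mA1 : margA P 1 = 0 := by
    simp [P, margA, PRbox, whiteNoise, sgn, Fin.sum_univ_two]; ring
  have mB0 : margB P 0 = 0 := by
    simp [P, margB, PRbox, whiteNoise, sgn, Fin.sum_univ_two]
  have mB1 : margB P 1 = 0 := by
    simp [P, margB, PRbox, whiteNoise, sgn, Fin.sum_univ_two]
  have mA'0 : margA P' 0 = 0 := by
    simp [P', margA, PRbox, whiteNoise, sgn, Fin.sum_univ_two]; ring
  have mA'1 : margA P' 1 = 0 := by
    simp [P', margA, PRbox, whiteNoise, sgn, Fin.sum_univ_two]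
  have mB'0 : margB P' 0 = 0 := by
    simp [P', margB, PRbox, whiteNoise, sgn, Fin.sum_univ_two]
  have mB'1 : margB P' 1 = 0 := by
    simp [P', margB, PRbox, whiteNoise, sgn, Fin.sum_univ_two]
  clear_value P P'
  set t := p * (Real.sqrt 2)⁻¹ with ht
  have htn : 0 ≤ t := mul_nonneg h0 hsi
  have hv2 : ((2 : Fin 2) : ℕ) = 0 := rfl
  have hv3 : ((3 : Fin 2) : ℕ) = 1 := rfl
  have hv4 : ((4 : Fin 2) : ℕ) = 0 := rfl
  have f000 : BellF P 0 0 0 = (4*t) := by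
    simp [BellF, sgn, c00, c01, c10, c11, hv2, hv3, hv4, ht] <;> ring
  have f001 : BellF P 0 0 1 = -(4*t) := by
    simp [BellF, sgn, c00, c01, c10, c11, hv2, hv3, hv4, ht] <;> ring
  have f010 : BellF P 0 1 0 = 0 := by
    simp [BellF, sgn, c00, c01, c10, c11, hv2, hv3, hv4, ht] <;> ring
  have f011 : BellF P 0 1 1 = 0 := by
    simp [BellF, sgn, c00, c01, c10, c11, hv2, hv3, hv4, ht] <;> ring
  have f100 : BellF P 1 0 0 = 0 := by
    simp [BellF, sgn, c00, c01, c10, c11, hv2, hv3, hv4, ht] <;> ring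
  have f101 : BellF P 1 0 1 = 0 := by
    simp [BellF, sgn, c00, c01, c10, c11, hv2, hv3, hv4, ht] <;> ring
  have f110 : BellF P 1 1 0 = 0 := by
    simp [BellF, sgn, c00, c01, c10, c11, hv2, hv3, hv4, ht] <;> ring
  have f111 : BellF P 1 1 1 = 0 := by
    simp [BellF, sgn, c00, c01, c10, c11, hv2, hv3, hv4, ht] <;> ring
  have g000 : BellF P' 0 0 0 = (2*p) := by
    simp [BellF, sgn, d00, d01, d10, d11, hv2, hv3, hv4, ht] <;> ring
  have g001 : BellF P' 0 0 1 = -(2*p) := by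
    simp [BellF, sgn, d00, d01, d10, d11, hv2, hv3, hv4, ht] <;> ring
  have g010 : BellF P' 0 1 0 = 0 := by
    simp [BellF, sgn, d00, d01, d10, d11, hv2, hv3, hv4, ht] <;> ring
  have g011 : BellF P' 0 1 1 = 0 := by
    simp [BellF, sgn, d00, d01, d10, d11, hv2, hv3, hv4, ht] <;> ring
  have g100 : BellF P' 1 0 0 = 0 := by
    simp [BellF, sgn, d00, d01, d10, d11, hv2, hv3, hv4, ht] <;> ring
  have g101 : BellF P' 1 0 1 = 0 := by
    simp [BellF, sgn, d00, d01, d10, d11, hv2, hv3, hv4, ht] <;> ring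
  have g110 : BellF P' 1 1 0 = -(2*p) := by
    simp [BellF, sgn, d00, d01, d10, d11, hv2, hv3, hv4, ht] <;> ring
  have g111 : BellF P' 1 1 1 = (2*p) := by
    simp [BellF, sgn, d00, d01, d10, d11, hv2, hv3, hv4, ht] <;> ring
  have u000 : MerminF P 0 0 0 = (2*t) := by
    simp [MerminF, sgn, c00, c01, c10, c11, hv2, hv3, hv4, ht] <;> ring
  have u001 : MerminF P 0 0 1 = -(2*t) := by
    simp [MerminF, sgn, c00, c01, c10, c11, hv2, hv3, hv4, ht] <;> ring
  have u010 : MerminF P 0 1 0 = 0 := by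
    simp [MerminF, sgn, c00, c01, c10, c11, hv2, hv3, hv4, ht] <;> ring
  have u011 : MerminF P 0 1 1 = 0 := by
    simp [MerminF, sgn, c00, c01, c10, c11, hv2, hv3, hv4, ht] <;> ring
  have u100 : MerminF P 1 0 0 = 0 := by
    simp [MerminF, sgn, c00, c01, c10, c11, hv2, hv3, hv4, ht] <;> ring
  have u101 : MerminF P 1 0 1 = 0 := by
    simp [MerminF, sgn, c00, c01, c10, c11, hv2, hv3, hv4, ht] <;> ring
  have u110 : MerminF P 1 1 0 = (2*t) := by
    simp [MerminF, sgn, c00, c01, c10, c11, hv2, hv3, hv4, ht] <;> ring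
  have u111 : MerminF P 1 1 1 = -(2*t) := by
    simp [MerminF, sgn, c00, c01, c10, c11, hv2, hv3, hv4, ht] <;> ring
  have v000 : MerminF P' 0 0 0 = (2*p) := by
    simp [MerminF, sgn, d00, d01, d10, d11, hv2, hv3, hv4, ht] <;> ring
  have v001 : MerminF P' 0 0 1 = -(2*p) := by
    simp [MerminF, sgn, d00, d01, d10, d11, hv2, hv3, hv4, ht] <;> ring
  have v010 : MerminF P' 0 1 0 = 0 := by
    simp [MerminF, sgn, d00, d01, d10, d11, hv2, hv3, hv4, ht] <;> ring
  have v011 : MerminF P' 0 1 1 = 0 := by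
    simp [MerminF, sgn, d00, d01, d10, d11, hv2, hv3, hv4, ht] <;> ring
  have v100 : MerminF P' 1 0 0 = 0 := by
    simp [MerminF, sgn, d00, d01, d10, d11, hv2, hv3, hv4, ht] <;> ring
  have v101 : MerminF P' 1 0 1 = 0 := by
    simp [MerminF, sgn, d00, d01, d10, d11, hv2, hv3, hv4, ht] <;> ring
  have v110 : MerminF P' 1 1 0 = 0 := by
    simp [MerminF, sgn, d00, d01, d10, d11, hv2, hv3, hv4, ht] <;> ring
  have v111 : MerminF P' 1 1 1 = 0 := by
    simp [MerminF, sgn, d00, d01, d10, d11, hv2, hv3, hv4, ht] <;> ring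
  have key : (4:ℝ) * t = 2 * Real.sqrt 2 * p := by
    have h2 : Real.sqrt 2 * Real.sqrt 2 = 2 := Real.mul_self_sqrt (by norm_num)
    have hne : Real.sqrt 2 ≠ 0 := by positivity
    have h : 2 * Real.sqrt 2 * p = 2 * Real.sqrt 2 * p * (Real.sqrt 2 * (Real.sqrt 2)⁻¹) := by
      rw [mul_inv_cancel₀ hne]; ring
    rw [ht, h]
    calc 4 * (p * (Real.sqrt 2)⁻¹) = 2 * (Real.sqrt 2 * Real.sqrt 2) * (p * (Real.sqrt 2)⁻¹) := by
          rw [h2]; ring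
      _ = 2 * Real.sqrt 2 * p * (Real.sqrt 2 * (Real.sqrt 2)⁻¹) := by ring
  have B00 : BellD P 0 0 = 4 * t := by
    rw [BellD, f000, f001, abs_neg, abs_of_nonneg (by linarith), max_self]
  have B01 : BellD P 0 1 = 0 := by rw [BellD, f010, f011]; simp
  have B10 : BellD P 1 0 = 0 := by rw [BellD, f100, f101]; simp
  have B11 : BellD P 1 1 = 0 := by rw [BellD, f110, f111]; simp
  have B00' : BellD P' 0 0 = 2 * p := by
    rw [BellD, g000, g001, abs_neg, abs_of_nonneg (by linarith), max_self]
  have B01' : BellD P' 0 1 = 0 := by rw [BellD, g010, g011]; simp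
  have B10' : BellD P' 1 0 = 0 := by rw [BellD, g100, g101]; simp
  have B11' : BellD P' 1 1 = 2 * p := by
    rw [BellD, g110, g111, abs_neg, abs_of_nonneg (by linarith), max_self]
  have M00 : MerminD P 0 0 = 2 * t := by
    rw [MerminD, u000, u001, abs_neg, abs_of_nonneg (by linarith), max_self]
  have M01 : MerminD P 0 1 = 0 := by rw [MerminD, u010, u011]; simp
  have M10 : MerminD P 1 0 = 0 := by rw [MerminD, u100, u101]; simp
  have M11 : MerminD P 1 1 = 2 * t := by
    rw [MerminD, u110, u111, abs_neg, abs_of_nonneg (by linarith), max_self]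
  have M00' : MerminD P' 0 0 = 2 * p := by
    rw [MerminD, v000, v001, abs_neg, abs_of_nonneg (by linarith), max_self]
  have M01' : MerminD P' 0 1 = 0 := by rw [MerminD, v010, v011]; simp
  have M10' : MerminD P' 1 0 = 0 := by rw [MerminD, v100, v101]; simp
  have M11' : MerminD P' 1 1 = 0 := by rw [MerminD, v110, v111]; simp
  have bp : ∀ a b, BellProdD P a b = 0 := by
    intro a b; simp [BellProdD, BellProdF, mA0, mA1, mB0, mB1]
  have bp' : ∀ a b, BellProdD P' a b = 0 := by
    intro a b; simp [BellProdD, BellProdF, mA'0, mA'1, mB'0, mB'1]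
  have TP : Tmeasure P = 4 * t := by
    rw [Tmeasure, B00, B01, B10, B11, bp, bp, bp, bp]
    simp [abs_of_nonneg (show (0:ℝ) ≤ 4*t by linarith)]
    exact htn
  have TP' : Tmeasure P' = 2 * p := by
    rw [Tmeasure, B00', B01', B10', B11', bp', bp', bp', bp']
    simp [abs_of_nonneg (show (0:ℝ) ≤ 2*p by linarith)]
    rw [sup_eq_left.mpr (show (0:ℝ) ≤ 2*p by linarith), sup_eq_right.mpr (show (0:ℝ) ≤ 2*p by linarith), max_self]
  have GP : BellDiscord P = 4 * t := by
    rw [BellDiscord, B00, B01, B10, B11]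
    simp [abs_of_nonneg (show (0:ℝ) ≤ 4*t by linarith)]
  have GP' : BellDiscord P' = 0 := by
    rw [BellDiscord, B00', B01', B10', B11']
    simp [abs_of_nonneg (show (0:ℝ) ≤ 2*p by linarith)]
  have QP : MerminDiscord P = 0 := by
    rw [MerminDiscord, M00, M01, M10, M11]
    simp [abs_of_nonneg (show (0:ℝ) ≤ 2*t by linarith), abs_sub_comm (0:ℝ)]
  have QP' : MerminDiscord P' = 2 * p := by
    rw [MerminDiscord, M00', M01', M10', M11']
    simp [abs_of_nonneg (show (0:ℝ) ≤ 2*p by linarith)]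
  refine ⟨by rw [TP, key], by rw [GP, key], QP, TP', QP', GP', ?_, ?_⟩
  · rw [TP, GP, QP]; ring
  · rw [TP', GP', QP']; ring


end
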